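/- Let n ≥ 3, θ : [0, ∞) → ℝ be C¹ with θ'(t) + θ(t)²/(n−2) ≤ 0 for all t ≥ 0 and θ(0) ≤ 0. Then ∫₀^∞ θ(t)² dt = 0 and θ(0) = 0. -/

import Mathlib

/-- If `θ` is C¹ on `[0, ∞)` with `θ' + θ²/(n-2) ≤ 0` (`n ≥ 3`) and `θ 0 ≤ 0`, then
`∫₀^∞ θ² = 0` and `θ 0 = 0`. -/
theorem raychaudhuri_integral_vanishes (n : ℕ) (hn : 3 ≤ n) (θ θ' : ℝ → ℝ)
    (hderiv : ∀ t ∈ Set.Ici (0:ℝ), HasDerivAt θ (θ' t) t)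
    (hcont : ContinuousOn θ' (Set.Ici 0))
    (hineq : ∀ t ∈ Set.Ici (0:ℝ), θ' t + θ t ^ 2 / ((n : ℝ) - 2) ≤ 0)
    (h0 : θ 0 ≤ 0) :
    (∫ t in Set.Ioi (0:ℝ), θ t ^ 2) = 0 ∧ θ 0 = 0 := by
  have hn2 : (0:ℝ) < (n : ℝ) - 2 := by
    have : (3:ℝ) ≤ (n : ℝ) := by exact_mod_cast hn
    linarith
  -- θ' ≤ 0 on Ici 0
  have hder_nonpos : ∀ t ∈ Set.Ici (0:ℝ), θ' t ≤ 0 := by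
    intro t ht
    have h1 := hineq t ht
    have h2 : 0 ≤ θ t ^ 2 / ((n : ℝ) - 2) := div_nonneg (sq_nonneg _) hn2.le
    linarith
  have hcontθ : ContinuousOn θ (Set.Ici 0) := fun t ht =>
    (hderiv t ht).continuousAt.continuousWithinAt
  -- θ is antitone on Ici 0
  have hanti : AntitoneOn θ (Set.Ici 0) := by
    apply antitoneOn_of_deriv_nonpos (convex_Ici 0) hcontθ
    · intro t ht
      rw [interior_Ici] at ht
      exact (hderiv t (Set.mem_Ici.2 (Set.mem_Ioi.1 ht).le)).differentiableAt.differentiableWithinAt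
    · intro t ht
      rw [interior_Ici] at ht
      rw [(hderiv t (Set.mem_Ici.2 (Set.mem_Ioi.1 ht).le)).deriv]
      exact hder_nonpos t (Set.mem_Ici.2 (Set.mem_Ioi.1 ht).le)
  -- θ = 0 on Ici 0
  have hzero : ∀ t ∈ Set.Ici (0:ℝ), θ t = 0 := by
    intro t₀ ht₀
    by_contra hne
    -- θ t₀ ≤ θ 0 ≤ 0, so θ t₀ < 0
    have hle0 : θ t₀ ≤ 0 := le_trans (hanti (le_refl (0:ℝ)) ht₀ ht₀) h0
    have hlt : θ t₀ < 0 := lt_of_le_of_ne hle0 hne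
    -- on Ici t₀, θ t ≤ θ t₀ < 0
    have hneg : ∀ t ∈ Set.Ici t₀, θ t < 0 := by
      intro t ht
      exact lt_of_le_of_lt (hanti ht₀ (Set.mem_Ici.2 (le_trans (Set.mem_Ici.1 ht₀) (Set.mem_Ici.1 ht))) ht) hlt
    have hsub : Set.Ici t₀ ⊆ Set.Ici (0:ℝ) := Set.Ici_subset_Ici.2 ht₀
    -- g = θ⁻¹ has derivative ≥ 1/(n-2)
    set g : ℝ → ℝ := fun t => (θ t)⁻¹ with hg
    have hgderiv : ∀ t ∈ Set.Ici t₀, HasDerivAt g (-θ' t / θ t ^ 2) t := by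
      intro t ht
      exact (hderiv t (hsub ht)).inv (hneg t ht).ne
    have key := Convex.mul_sub_le_image_sub_of_le_deriv (convex_Ici t₀)
      (f := g) (C := 1 / ((n:ℝ) - 2))
      (fun t ht => (hgderiv t ht).continuousAt.continuousWithinAt)
      (by
        intro t ht
        rw [interior_Ici] at ht
        exact (hgderiv t (Set.mem_Ici.2 (Set.mem_Ioi.1 ht).le)).differentiableAt.differentiableWithinAt)
      (by
        intro t ht
        rw [interior_Ici] at ht
        rw [(hgderiv t (Set.mem_Ici.2 (Set.mem_Ioi.1 ht).le)).deriv]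
        have hθsq : 0 < θ t ^ 2 := pow_pos (neg_pos.2 (hneg t (Set.mem_Ici.2 (Set.mem_Ioi.1 ht).le))) 2 |>.trans_eq (by ring)
        have h1 := hineq t (hsub (Set.mem_Ici.2 (Set.mem_Ioi.1 ht).le))
        -- θ' t ≤ -θ t ^2 / (n-2)
        rw [div_le_div_iff₀ hn2 hθsq, one_mul]
        have h2 : θ t ^ 2 / ((n:ℝ) - 2) ≤ -θ' t := by linarith
        have h3 := (div_le_iff₀ hn2).mp h2
        linarith)
    -- pick t large
    set T : ℝ := t₀ + ((n:ℝ) - 2) * (1 - g t₀)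
    have hT : t₀ ≤ T := by
      have h4 : g t₀ < 0 := inv_neg''.2 hlt
      have h5 : 0 < ((n:ℝ) - 2) * (1 - g t₀) := mul_pos hn2 (by linarith)
      show t₀ ≤ t₀ + ((n:ℝ) - 2) * (1 - g t₀)
      linarith
    have := key t₀ (le_refl t₀) T hT hT
    have hTeqT : 1 / ((n:ℝ) - 2) * (T - t₀) = 1 - g t₀ := by
      field_simp [T]
      show t₀ + ((n:ℝ) - 2) * (1 - g t₀) - t₀ = _
      ring
    rw [hTeqT] at this
    have hgT : g T < 0 := inv_neg''.2 (hneg T hT)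
    linarith
  constructor
  · have : Set.EqOn (fun t => θ t ^ 2) (fun _ => (0:ℝ)) (Set.Ioi 0) := by
      intro t ht
      simp [hzero t (Set.mem_Ici.2 (Set.mem_Ioi.1 ht).le)]
    rw [MeasureTheory.setIntegral_congr_fun measurableSet_Ioi this]
    simp
  · exact hzero 0 (Set.mem_Ici.2 le_rfl)
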